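/- (Result 3) Let S ⊆ D with k ∈ S, let (θ̂, λ̂) be an optimal solution of P(S) and (û, v̂, ŵ) an optimal dual solution satisfying the KKT conditions for P(S). If −û x_t + v̂ y_t + ŵ ≤ 0 for all t ∈ D\S, then extending λ̂ by zeros on D\S gives an optimal solution of P(D); in particular θ_k^S = θ_k^D. -/

import Mathlib

open Finset

/-- Feasibility for the primal problem P(S) (inputs scaled by M at DMU k). -/
def PFeas {ι : Type*} [DecidableEq ι] {m n : ℕ} (S : Finset ι) (k : ι) (M : ℝ)
    (x : ι → Fin m → ℝ) (y : ι → Fin n → ℝ) (θ : ℝ) (lam : ι → ℝ) : Prop :=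
  (∀ i, lam k * (M * x k i) + ∑ r ∈ S.erase k, lam r * x r i ≤ θ * (M * x k i)) ∧
  (∀ j, y k j ≤ lam k * y k j + ∑ r ∈ S.erase k, lam r * y r j) ∧
  (∑ r ∈ S, lam r = 1) ∧
  (∀ r ∈ S, 0 ≤ lam r)

/-- Feasibility for the dual problem D(D). -/
def DFeas {ι : Type*} [DecidableEq ι] {m n : ℕ} (D : Finset ι) (k : ι) (M : ℝ)
    (x : ι → Fin m → ℝ) (y : ι → Fin n → ℝ)
    (u : Fin m → ℝ) (v : Fin n → ℝ) (w : ℝ) : Prop :=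
  (∑ i, u i * (M * x k i)) = 1 ∧
  (∀ r ∈ D.erase k, -(∑ i, u i * x r i) + (∑ j, v j * y r j) + w ≤ 0) ∧
  (-(∑ i, u i * (M * x k i)) + (∑ j, v j * y k j) + w ≤ 0) ∧
  (∀ i, 0 ≤ u i) ∧ (∀ j, 0 ≤ v j)

/-- Feasibility for the M = 1 dual Problem (2). -/
def Feas2 {ι : Type*} {m n : ℕ} (D : Finset ι) (k : ι)
    (x : ι → Fin m → ℝ) (y : ι → Fin n → ℝ)
    (u : Fin m → ℝ) (v : Fin n → ℝ) (w : ℝ) : Prop :=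
  (∑ i, u i * x k i) = 1 ∧
  (∀ r ∈ D, -(∑ i, u i * x r i) + (∑ j, v j * y r j) + w ≤ 0) ∧
  (∀ i, 0 ≤ u i) ∧ (∀ j, 0 ≤ v j)

/-- Feasibility for the standard primal Problem (1). -/
def Feas1 {ι : Type*} {m n : ℕ} (D : Finset ι) (k : ι)
    (x : ι → Fin m → ℝ) (y : ι → Fin n → ℝ) (θ : ℝ) (lam : ι → ℝ) : Prop :=
  (∀ i, ∑ r ∈ D, lam r * x r i ≤ θ * x k i) ∧
  (∀ j, y k j ≤ ∑ r ∈ D, lam r * y r j) ∧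
  (∑ r ∈ D, lam r = 1) ∧
  (∀ r ∈ D, 0 ≤ lam r)

/-- Zero-extension of a feasible solution of P(S) is feasible for P(D). -/
lemma extend_feas {ι : Type*} [DecidableEq ι] {m n : ℕ} (D S : Finset ι) (k : ι)
    (hS : S ⊆ D) (hk : k ∈ S) (M θ : ℝ) (x : ι → Fin m → ℝ) (y : ι → Fin n → ℝ)
    (lam : ι → ℝ) (h : PFeas S k M x y θ lam) :
    PFeas D k M x y θ (fun r => if r ∈ S then lam r else 0) := by
  obtain ⟨h1, h2, h3, h4⟩ := h
  have hsub : S.erase k ⊆ D.erase k := Finset.erase_subset_erase k hS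
  have hkey : ∀ g : ι → ℝ, ∑ r ∈ D.erase k, (if r ∈ S then lam r else 0) * g r
      = ∑ r ∈ S.erase k, lam r * g r := by
    intro g
    rw [← Finset.sum_subset hsub]
    · exact Finset.sum_congr rfl fun r hr => by
        rw [if_pos (Finset.mem_of_mem_erase hr)]
    · intro r hr hr'
      have : r ∉ S := fun hrS => hr' (Finset.mem_erase.2 ⟨(Finset.mem_erase.1 hr).1, hrS⟩)
      rw [if_neg this, zero_mul]
  have hsum : ∑ r ∈ D, (if r ∈ S then lam r else 0) = ∑ r ∈ S, lam r := by
    rw [← Finset.sum_subset hS]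
    · exact Finset.sum_congr rfl fun r hr => if_pos hr
    · intro r _ hr'; rw [if_neg hr']
  refine ⟨fun i => ?_, fun j => ?_, ?_, fun r hr => ?_⟩
  · simp only [if_pos hk, hkey]; exact h1 i
  · simp only [if_pos hk, hkey]; exact h2 j
  · rw [hsum]; exact h3
  · by_cases hrS : r ∈ S
    · simpa [hrS] using h4 r hrS
    · simp [hrS]

/-- Pushing a linear functional through the primal-constraint left-hand side. -/
lemma lhs_push {ι : Type*} [DecidableEq ι] {κ : Type*} [Fintype κ] (T : Finset ι) (k : ι)
    (c : κ → ℝ) (a : κ → ℝ) (b : ι → κ → ℝ) (l : ι → ℝ) :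
    ∑ i, c i * (l k * a i + ∑ r ∈ T.erase k, l r * b r i)
      = l k * (∑ i, c i * a i) + ∑ r ∈ T.erase k, l r * (∑ i, c i * b r i) := by
  simp only [mul_add, Finset.sum_add_distrib]
  congr 1
  · rw [Finset.mul_sum]; exact Finset.sum_congr rfl fun i _ => by ring
  · calc ∑ i, c i * ∑ r ∈ T.erase k, l r * b r i
        = ∑ i, ∑ r ∈ T.erase k, c i * (l r * b r i) :=
          Finset.sum_congr rfl fun i _ => Finset.mul_sum _ _ _
      _ = ∑ r ∈ T.erase k, ∑ i, c i * (l r * b r i) := Finset.sum_comm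
      _ = ∑ r ∈ T.erase k, l r * ∑ i, c i * b r i :=
          Finset.sum_congr rfl fun r _ => by
            rw [Finset.mul_sum]; exact Finset.sum_congr rfl fun i _ => by ring

/-- Weak duality: any dual-feasible (u,v,w) for D(T) bounds every primal-feasible θ. -/
lemma dual_le {ι : Type*} [DecidableEq ι] {m n : ℕ} (T : Finset ι) (k : ι) (hk : k ∈ T)
    (M : ℝ) (x : ι → Fin m → ℝ) (y : ι → Fin n → ℝ)
    (u : Fin m → ℝ) (v : Fin n → ℝ) (w : ℝ)
    (hu1 : (∑ i, u i * (M * x k i)) = 1)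
    (hdr : ∀ r ∈ T.erase k, -(∑ i, u i * x r i) + (∑ j, v j * y r j) + w ≤ 0)
    (hdk : -(∑ i, u i * (M * x k i)) + (∑ j, v j * y k j) + w ≤ 0)
    (hu : ∀ i, 0 ≤ u i) (hv : ∀ j, 0 ≤ v j)
    (θ : ℝ) (l : ι → ℝ) (h : PFeas T k M x y θ l) :
    (∑ j, v j * y k j) + w ≤ θ := by
  obtain ⟨h1, h2, h3, h4⟩ := h
  have hA : ∑ i, u i * (l k * (M * x k i) + ∑ r ∈ T.erase k, l r * x r i) ≤ θ := by
    calc ∑ i, u i * (l k * (M * x k i) + ∑ r ∈ T.erase k, l r * x r i)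
        ≤ ∑ i, u i * (θ * (M * x k i)) :=
          Finset.sum_le_sum fun i _ => mul_le_mul_of_nonneg_left (h1 i) (hu i)
      _ = θ * ∑ i, u i * (M * x k i) := by
          rw [Finset.mul_sum]; exact Finset.sum_congr rfl fun i _ => by ring
      _ = θ := by rw [hu1, mul_one]
  rw [lhs_push] at hA
  have hC : l k * ((∑ j, v j * y k j) + w) + ∑ r ∈ T.erase k, l r * ((∑ j, v j * y r j) + w)
      ≤ l k * (∑ i, u i * (M * x k i)) + ∑ r ∈ T.erase k, l r * (∑ i, u i * x r i) := by
    refine add_le_add ?_ ?_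
    · exact mul_le_mul_of_nonneg_left (by linarith [hdk]) (h4 k hk)
    · refine Finset.sum_le_sum fun r hr => ?_
      exact mul_le_mul_of_nonneg_left (by linarith [hdr r hr])
        (h4 r (Finset.mem_of_mem_erase hr))
  have hD : l k * ((∑ j, v j * y k j) + w) + ∑ r ∈ T.erase k, l r * ((∑ j, v j * y r j) + w)
      = (∑ j, v j * (l k * y k j + ∑ r ∈ T.erase k, l r * y r j)) + w * (∑ r ∈ T, l r) := by
    rw [lhs_push T k v (fun j => y k j) (fun r j => y r j) l]
    rw [← Finset.add_sum_erase T l hk]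
    simp only [mul_add, Finset.sum_add_distrib, Finset.sum_mul]
    ring_nf
    rw [← Finset.mul_sum]
    ring
  have hE : (∑ j, v j * y k j) ≤ ∑ j, v j * (l k * y k j + ∑ r ∈ T.erase k, l r * y r j) :=
    Finset.sum_le_sum fun j _ => mul_le_mul_of_nonneg_left (h2 j) (hv j)
  rw [h3, mul_one] at hD
  linarith

theorem stmt9 {ι : Type*} [DecidableEq ι] {m n : ℕ} (D S : Finset ι) (k : ι)
    (hS : S ⊆ D) (hk : k ∈ S)
    (M : ℝ) (hM : 1 ≤ M) (x : ι → Fin m → ℝ) (y : ι → Fin n → ℝ)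
    (θhat : ℝ) (lam : ι → ℝ) (u : Fin m → ℝ) (v : Fin n → ℝ) (w : ℝ)
    (hprimal : PFeas S k M x y θhat lam)
    (hdual : DFeas S k M x y u v w)
    -- complementary slackness
    (hcs1 : ∑ i, u i * (θhat * (M * x k i) -
        (lam k * (M * x k i) + ∑ r ∈ S.erase k, lam r * x r i)) = 0)
    (hcs2 : ∑ j, v j * ((lam k * y k j + ∑ r ∈ S.erase k, lam r * y r j) - y k j) = 0)
    (hcs3 : w * ((∑ r ∈ S, lam r) - 1) = 0)
    (hcs4 : θhat * ((∑ i, u i * (M * x k i)) - 1) = 0)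
    (hcs5 : ∀ r ∈ S.erase k,
        lam r * (-(∑ i, u i * x r i) + (∑ j, v j * y r j) + w) = 0)
    (hcs6 : lam k * (-(∑ i, u i * (M * x k i)) + (∑ j, v j * y k j) + w) = 0)
    -- Condition (7)
    (hcond : ∀ t ∈ D \ S, -(∑ i, u i * x t i) + (∑ j, v j * y t j) + w ≤ 0) :
    PFeas D k M x y θhat (fun r => if r ∈ S then lam r else 0) ∧
    IsLeast {θ : ℝ | ∃ l : ι → ℝ, PFeas D k M x y θ l} θhat ∧
    ∀ θS θD : ℝ,
      IsLeast {θ : ℝ | ∃ l : ι → ℝ, PFeas S k M x y θ l} θS →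
      IsLeast {θ : ℝ | ∃ l : ι → ℝ, PFeas D k M x y θ l} θD →
      θS = θD := by
  obtain ⟨hu1, hdr, hdk, hu, hv⟩ := hdual
  obtain ⟨h1, h2, h3, h4⟩ := hprimal
  -- complementary slackness gives θhat = dual objective
  have hobj : θhat = (∑ j, v j * y k j) + w := by
    have e1 : ∑ i, u i * (θhat * (M * x k i))
        = ∑ i, u i * (lam k * (M * x k i) + ∑ r ∈ S.erase k, lam r * x r i) := by
      have := hcs1
      rw [Finset.sum_congr rfl (fun i _ => by ring : ∀ i ∈ Finset.univ,
        u i * (θhat * (M * x k i) - (lam k * (M * x k i) + ∑ r ∈ S.erase k, lam r * x r i))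
          = u i * (θhat * (M * x k i))
            - u i * (lam k * (M * x k i) + ∑ r ∈ S.erase k, lam r * x r i)),
        Finset.sum_sub_distrib, sub_eq_zero] at this
      exact this
    have e2 : ∑ i, u i * (θhat * (M * x k i)) = θhat := by
      rw [Finset.sum_congr rfl (fun i _ => by ring : ∀ i ∈ Finset.univ,
        u i * (θhat * (M * x k i)) = θhat * (u i * (M * x k i))),
        ← Finset.mul_sum, hu1, mul_one]
    have e3 : ∑ i, u i * (lam k * (M * x k i) + ∑ r ∈ S.erase k, lam r * x r i)
        = lam k * (∑ i, u i * (M * x k i))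
          + ∑ r ∈ S.erase k, lam r * (∑ i, u i * x r i) := lhs_push S k u _ _ lam
    have e4 : lam k * (∑ i, u i * (M * x k i)) = lam k * ((∑ j, v j * y k j) + w) := by
      nlinarith [hcs6]
    have e5 : ∑ r ∈ S.erase k, lam r * (∑ i, u i * x r i)
        = ∑ r ∈ S.erase k, lam r * ((∑ j, v j * y r j) + w) :=
      Finset.sum_congr rfl fun r hr => by nlinarith [hcs5 r hr]
    have e6 : lam k * ((∑ j, v j * y k j) + w)
        + ∑ r ∈ S.erase k, lam r * ((∑ j, v j * y r j) + w)
        = (∑ j, v j * (lam k * y k j + ∑ r ∈ S.erase k, lam r * y r j))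
          + w * (∑ r ∈ S, lam r) := by
      rw [lhs_push S k v (fun j => y k j) (fun r j => y r j) lam]
      rw [← Finset.add_sum_erase S lam hk]
      rw [Finset.sum_congr rfl (fun r _ => by ring : ∀ r ∈ S.erase k,
        lam r * ((∑ j, v j * y r j) + w) = lam r * (∑ j, v j * y r j) + lam r * w)]
      rw [Finset.sum_add_distrib, ← Finset.sum_mul]
      ring
    have e7 : ∑ j, v j * (lam k * y k j + ∑ r ∈ S.erase k, lam r * y r j)
        = ∑ j, v j * y k j := by
      have := hcs2
      rw [Finset.sum_congr rfl (fun j _ => by ring : ∀ j ∈ Finset.univ,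
        v j * ((lam k * y k j + ∑ r ∈ S.erase k, lam r * y r j) - y k j)
          = v j * (lam k * y k j + ∑ r ∈ S.erase k, lam r * y r j) - v j * y k j),
        Finset.sum_sub_distrib, sub_eq_zero] at this
      exact this
    rw [h3, mul_one] at e6
    rw [e7] at e6
    rw [e5, e4, e6] at e3
    rw [e1, e3] at e2
    linarith
  have hkD : k ∈ D := hS hk
  -- dual constraints hold over all of D.erase k
  have hdrD : ∀ r ∈ D.erase k, -(∑ i, u i * x r i) + (∑ j, v j * y r j) + w ≤ 0 := by
    intro r hr
    obtain ⟨hrk, hrD⟩ := Finset.mem_erase.1 hr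
    by_cases hrS : r ∈ S
    · exact hdr r (Finset.mem_erase.2 ⟨hrk, hrS⟩)
    · exact hcond r (Finset.mem_sdiff.2 ⟨hrD, hrS⟩)
  have hfeasD : PFeas D k M x y θhat (fun r => if r ∈ S then lam r else 0) :=
    extend_feas D S k hS hk M θhat x y lam ⟨h1, h2, h3, h4⟩
  have hleast : IsLeast {θ : ℝ | ∃ l : ι → ℝ, PFeas D k M x y θ l} θhat := by
    constructor
    · exact ⟨_, hfeasD⟩
    · rintro θ ⟨l, hl⟩
      rw [hobj]
      exact dual_le D k hkD M x y u v w hu1 hdrD hdk hu hv θ l hl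
  refine ⟨hfeasD, hleast, fun θS θD hLS hLD => ?_⟩
  have hθD : θD = θhat := hLD.unique hleast
  have hS1 : θS ≤ θhat := hLS.2 ⟨lam, h1, h2, h3, h4⟩
  obtain ⟨lS, hlS⟩ := hLS.1
  have hS2 : θD ≤ θS := hLD.2 ⟨_, extend_feas D S k hS hk M θS x y lS hlS⟩
  linarith
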